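/- In cylindrical symmetry γ = f(ρ), if ρ₀ > 0 satisfies 1 + 2f(ρ₀)²ρ₀² + f(ρ₀)f′(ρ₀)ρ₀³ = 0, then for any ζ₀ ∈ ℝ the circle x¹(t) = ρ₀ cos t, x²(t) = ρ₀ sin t, x³(t) = ζ₀ (a circle in a plane parallel to xOy with center on the Oz axis) is a solution of the anisotropic equations of motion. -/

import Mathlib

/-- in cylindrical symmetry `γ = f(ρ)`, if `ρ₀ > 0` satisfies
`1 + 2f(ρ₀)²ρ₀² + f(ρ₀)f′(ρ₀)ρ₀³ = 0`, then for any `ζ₀` the circle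
`x(t) = (ρ₀ cos t, ρ₀ sin t, ζ₀)` solves the anisotropic equations of motion. -/
theorem horizontal_circle_is_solution
    (f f' : ℝ → ℝ) (hf : ∀ r > (0:ℝ), HasDerivAt f (f' r) r)
    (hfpos : ∀ r > (0:ℝ), 0 < f r)
    (ρ₀ : ℝ) (hρ₀ : 0 < ρ₀)
    (hcond : 1 + 2 * (f ρ₀) ^ 2 * ρ₀ ^ 2 + f ρ₀ * f' ρ₀ * ρ₀ ^ 3 = 0)
    (ζ₀ : ℝ)
    (x : ℝ → Fin 3 → ℝ)
    (hx : ∀ t, x t = ![ρ₀ * Real.cos t, ρ₀ * Real.sin t, ζ₀])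
    (V : ℝ → Fin 3 → ℝ) (hV : ∀ t i, V t i = deriv (fun s => x s i) t)
    (v : ℝ → ℝ) (hvel : ∀ t, (v t) ^ 2 = ∑ i, V t i ^ 2)
    (γgrad : ℝ → Fin 3 → ℝ)
    (hγgrad : ∀ t, γgrad t = ![f' ρ₀ * (x t 0 / ρ₀), f' ρ₀ * (x t 1 / ρ₀), 0]) :
    ∀ t : ℝ, ∀ i, deriv (fun s => V s i) t
      + (4 * f ρ₀ * (v t) ^ 2 * (1 + 3 * (f ρ₀) ^ 2 * (v t) ^ 2)
          / ((1 + 2 * (f ρ₀) ^ 2 * (v t) ^ 2) * (1 + 6 * (f ρ₀) ^ 2 * (v t) ^ 2)))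
          * (∑ s, γgrad t s * V t s) * V t i
      - (f ρ₀ * (v t) ^ 4 / (1 + 2 * (f ρ₀) ^ 2 * (v t) ^ 2)) * γgrad t i = 0 := by
  have hx0 : (fun s => x s 0) = fun s => ρ₀ * Real.cos s := funext fun s => by
    rw [hx]; simp
  have hx1 : (fun s => x s 1) = fun s => ρ₀ * Real.sin s := funext fun s => by
    rw [hx]; simp
  have hx2 : (fun s => x s 2) = fun _ => ζ₀ := funext fun s => by
    rw [hx]; simp
  have hV0 : ∀ t, V t 0 = -(ρ₀ * Real.sin t) := fun t => by
    rw [hV, hx0, ((Real.hasDerivAt_cos t).const_mul ρ₀).deriv]; ring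
  have hV1 : ∀ t, V t 1 = ρ₀ * Real.cos t := fun t => by
    rw [hV, hx1, ((Real.hasDerivAt_sin t).const_mul ρ₀).deriv]
  have hV2 : ∀ t, V t 2 = 0 := fun t => by
    rw [hV, hx2, deriv_const]
  have hv2 : ∀ t, (v t) ^ 2 = ρ₀ ^ 2 := fun t => by
    rw [hvel, Fin.sum_univ_three, hV0, hV1, hV2]
    nlinarith [Real.sin_sq_add_cos_sq t]
  have hDV0 : ∀ t, deriv (fun s => V s 0) t = -(ρ₀ * Real.cos t) := fun t => by
    have : (fun s => V s 0) = fun s => -(ρ₀ * Real.sin s) := funext fun s => hV0 s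
    rw [this]; exact (((Real.hasDerivAt_sin t).const_mul ρ₀).neg).deriv
  have hDV1 : ∀ t, deriv (fun s => V s 1) t = -(ρ₀ * Real.sin t) := fun t => by
    have : (fun s => V s 1) = fun s => ρ₀ * Real.cos s := funext fun s => hV1 s
    rw [this, ((Real.hasDerivAt_cos t).const_mul ρ₀).deriv]; ring
  have hDV2 : ∀ t, deriv (fun s => V s 2) t = 0 := fun t => by
    have : (fun s => V s 2) = fun _ => (0:ℝ) := funext fun s => hV2 s
    rw [this, deriv_const]
  have hsum : ∀ t, (∑ s, γgrad t s * V t s) = 0 := fun t => by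
    rw [Fin.sum_univ_three, hγgrad, hV0, hV1, hV2, hx]
    simp
    ring
  have hv4 : ∀ t, (v t) ^ 4 = ρ₀ ^ 4 := fun t => by nlinarith [hv2 t]
  have hden : (1 + 2 * (f ρ₀) ^ 2 * ρ₀ ^ 2) ≠ 0 := by
    have := hfpos ρ₀ hρ₀
    positivity
  intro t i
  rw [hsum, hv2]
  match i with
  | 0 =>
    rw [hDV0, hγgrad, hv4]
    simp [hx]
    field_simp
    linear_combination (-(ρ₀ * Real.cos t)) * hcond
  | 1 =>
    rw [hDV1, hγgrad, hv4]
    simp [hx]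
    field_simp
    linear_combination (-(ρ₀ * Real.sin t)) * hcond
  | 2 =>
    rw [hDV2, hγgrad]
    simp
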